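/- The binomial Eulerian polynomial \tilde{A}_n(x) is symmetric with center n/2: x^n \tilde{A}_n(1/x) = \tilde{A}_n(x). -/

import Mathlib

open Polynomial Finset

/-- The value `w(i)` of a permutation of `{0,…,n-1}` at position `i` (0-based),
padded by `n` outside the range. -/
def permVal {n : ℕ} (w : Equiv.Perm (Fin n)) (i : ℕ) : ℕ :=
  if h : i < n then (w ⟨i, h⟩ : ℕ) else n

/-- The number of descents of a permutation. -/
def des {n : ℕ} (w : Equiv.Perm (Fin n)) : ℕ :=
  ((Finset.range (n - 1)).filter fun i => permVal w (i + 1) < permVal w i).card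

/-- descent count of a list -/
def descList : List ℕ → ℕ
  | [] => 0
  | [_] => 0
  | a :: b :: t => (if b < a then 1 else 0) + descList (b :: t)

lemma descList_cons_le (a : ℕ) (t : List ℕ) : descList (a :: t) ≤ t.length := by
  induction t generalizing a with
  | nil => simp [descList]
  | cons b t ih =>
    show (if b < a then 1 else 0) + descList (b :: t) ≤ t.length + 1
    have := ih b
    split <;> omega

lemma descList_eq_sum : ∀ l : List ℕ,
    (∑ i ∈ range (l.length - 1), if l.getD (i+1) 0 < l.getD i 0 then 1 else 0) = descList l
  | [] => by simp [descList]
  | [a] => by simp [descList]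
  | a :: b :: t => by
    have h : (a :: b :: t).length - 1 = (b :: t).length - 1 + 1 := by simp
    rw [h, Finset.sum_range_succ']
    have : (∑ i ∈ range ((b :: t).length - 1),
        if (a :: b :: t).getD (i + 1 + 1) 0 < (a :: b :: t).getD (i + 1) 0 then 1 else 0)
        = ∑ i ∈ range ((b :: t).length - 1),
        if (b :: t).getD (i + 1) 0 < (b :: t).getD i 0 then 1 else 0 := by
      apply Finset.sum_congr rfl
      intro i _
      simp [List.getD_cons_succ]
    rw [this, descList_eq_sum (b :: t)]
    show descList (b :: t) + (if b < a then 1 else 0) = descList (a :: b :: t)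
    show _ = (if b < a then 1 else 0) + descList (b :: t)
    omega

lemma des_eq_descList {n : ℕ} (w : Equiv.Perm (Fin n)) :
    des w = descList (List.ofFn fun i => (w i : ℕ)) := by
  rw [des, Finset.card_filter, ← descList_eq_sum]
  have hl : (List.ofFn fun i => (w i : ℕ)).length = n := by simp
  rw [hl]
  apply Finset.sum_congr rfl
  intro i hi
  rw [Finset.mem_range] at hi
  have h1 : i < n := by omega
  have h2 : i + 1 < n := by omega
  have g : ∀ j (hj : j < n), (List.ofFn fun i => (w i : ℕ)).getD j 0 = permVal w j := by
    intro j hj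
    rw [List.getD_eq_getElem _ _ (by simpa using hj)]
    simp [permVal, hj]
  rw [g i h1, g (i+1) h2]

def listOf {n : ℕ} (w : Equiv.Perm (Fin n)) : List ℕ := List.ofFn fun i => (w i : ℕ)

/-- insert the max value `n` at position `p` -/
def phi {n : ℕ} (p : Fin (n+1)) (w : Equiv.Perm (Fin n)) : Equiv.Perm (Fin (n+1)) :=
  (finSuccEquiv' p).trans ((w.optionCongr).trans (finSuccEquiv' (Fin.last n)).symm)

lemma phi_apply_self {n : ℕ} (p : Fin (n+1)) (w : Equiv.Perm (Fin n)) :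
    phi p w p = Fin.last n := by
  simp [phi]

lemma phi_apply_succAbove {n : ℕ} (p : Fin (n+1)) (w : Equiv.Perm (Fin n)) (j : Fin n) :
    phi p w (p.succAbove j) = (w j).castSucc := by
  simp [phi, Fin.succAbove_last]

lemma phi_bijective {n : ℕ} :
    Function.Bijective (fun pw : Fin (n+1) × Equiv.Perm (Fin n) => phi pw.1 pw.2) := by
  rw [Fintype.bijective_iff_injective_and_card]
  constructor
  · rintro ⟨p, w⟩ ⟨p', w'⟩ h
    simp only at h
    have hp : p = p' := by
      by_contra hne
      obtain ⟨j, hj⟩ := Fin.exists_succAbove_eq hne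
      have h1 : phi p w p = Fin.last n := phi_apply_self p w
      have h2 : phi p' w' (p'.succAbove j) = (w' j).castSucc := phi_apply_succAbove p' w' j
      rw [hj, ← h, h1] at h2
      exact (Fin.castSucc_lt_last (w' j)).ne h2.symm
    subst hp
    have hw : w = w' := by
      ext j
      have := congrArg (fun σ : Equiv.Perm (Fin (n+1)) => σ (p.succAbove j)) h
      simp only [phi_apply_succAbove] at this
      exact congrArg Fin.val (Fin.castSucc_injective _ this)
    rw [hw]
  · simp [Fintype.card_perm, Nat.factorial_succ]

lemma listOf_phi {n : ℕ} (p : Fin (n+1)) (w : Equiv.Perm (Fin n)) :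
    listOf (phi p w) = (listOf w).insertIdx p n := by
  have hlw : (listOf w).length = n := by simp [listOf]
  have hp : (p : ℕ) ≤ (listOf w).length := by rw [hlw]; exact Fin.is_le p
  apply List.ext_getElem
  · rw [List.length_insertIdx, if_pos hp]; simp [listOf]
  intro i hi hi'
  have hin : i < n + 1 := by simpa [listOf] using hi
  have hval : (listOf (phi p w))[i] = ((phi p w ⟨i, hin⟩ : Fin (n+1)) : ℕ) := by
    show (List.ofFn fun j => ((phi p w j : Fin (n+1)) : ℕ))[i] = _
    exact List.getElem_ofFn _
  rcases lt_trichotomy i (p : ℕ) with hlt | heq | hgt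
  · -- i < p
    have hiln : i < n := by have := Fin.is_le p; omega
    have hj : (⟨i, hin⟩ : Fin (n+1)) = p.succAbove ⟨i, hiln⟩ := by
      rw [Fin.succAbove_of_castSucc_lt]
      · rfl
      · exact hlt
    rw [hval, hj, phi_apply_succAbove]
    rw [List.getElem_insertIdx_of_lt hlt]
    simp [listOf]
  · -- i = p
    have : (⟨i, hin⟩ : Fin (n+1)) = p := by exact Fin.ext heq
    rw [hval, this, phi_apply_self]
    have := List.getElem_insertIdx_self (l := listOf w) (x := n) (i := p) (by rw [List.length_insertIdx, if_pos hp]; omega)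
    simp only [heq]
    rw [this]
    simp
  · -- i > p
    obtain ⟨k, hk⟩ : ∃ k, i = (p : ℕ) + k + 1 := ⟨i - p - 1, by omega⟩
    have hkn : (p : ℕ) + k < n := by omega
    have hj : (⟨i, hin⟩ : Fin (n+1)) = p.succAbove ⟨(p : ℕ) + k, hkn⟩ := by
      rw [Fin.succAbove_of_le_castSucc]
      · apply Fin.ext; simp [Fin.val_succ]; omega
      · rw [Fin.le_castSucc_iff]; apply Fin.lt_def.mpr; simp
    rw [hval, hj, phi_apply_succAbove]
    subst hk
    rw [List.getElem_insertIdx_add_succ (listOf w) n p k (by omega)]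
    simp [listOf]

lemma insert_sum (n : ℕ) : ∀ (l : List ℕ), (∀ x ∈ l, x < n) →
    ∑ p ∈ range (l.length + 1), (X : ℝ[X]) ^ descList (l.insertIdx p n)
      = ((descList l : ℝ[X]) + 1) * X ^ descList l
        + ((l.length - descList l : ℕ) : ℝ[X]) * X ^ (descList l + 1) := by
  intro l
  induction l with
  | nil => simp [descList]
  | cons a t ih =>
    intro h
    have ha : a < n := h a List.mem_cons_self
    have ht : ∀ x ∈ t, x < n := fun x hx => h x (List.mem_cons_of_mem a hx)
    have hd0 : descList (n :: a :: t) = 1 + descList (a :: t) := by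
      show (if a < n then 1 else 0) + _ = _
      rw [if_pos ha]
    rw [show (a :: t).length + 1 = (t.length + 1) + 1 from rfl, Finset.sum_range_succ']
    simp only [List.insertIdx_succ_cons, List.insertIdx_zero, hd0]
    cases t with
    | nil =>
      have h1 : descList (a :: [n]) = 0 := by
        show (if n < a then 1 else 0) + descList [n] = 0
        rw [if_neg (by omega)]
        rfl
      rw [show ([] : List ℕ).length + 1 = 1 from rfl, Finset.sum_range_one]
      simp only [List.insertIdx_zero, h1]
      show (X : ℝ[X]) ^ (0:ℕ) + X ^ (1 + descList [a]) = _
      have : descList [a] = 0 := rfl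
      rw [this]
      push_cast
      simp
    | cons b t' =>
      have hb : b < n := ht b List.mem_cons_self
      set D := descList (b :: t') with hD
      have hDL : D ≤ t'.length := descList_cons_le b t'
      have hins0 : descList (n :: b :: t') = 1 + D := by
        show (if b < n then 1 else 0) + _ = _
        rw [if_pos hb]
      -- inner sum split
      rw [Finset.sum_range_succ']
      simp only [List.insertIdx_succ_cons, List.insertIdx_zero]
      have hterm : ∀ j, descList (a :: b :: List.insertIdx t' j n)
          = (if b < a then 1 else 0) + descList (b :: List.insertIdx t' j n) := fun j => rfl
      have hsum2 : ∑ j ∈ range ((b :: t').length), (X:ℝ[X]) ^ descList (a :: b :: List.insertIdx t' j n)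
          = X ^ (if b < a then 1 else 0) *
            ∑ j ∈ range ((b :: t').length), (X:ℝ[X]) ^ descList (b :: List.insertIdx t' j n) := by
        rw [Finset.mul_sum]
        apply Finset.sum_congr rfl
        intro j _
        rw [hterm j, pow_add]
      have hIH := ih ht
      rw [Finset.sum_range_succ'] at hIH
      simp only [List.insertIdx_succ_cons, List.insertIdx_zero, hins0] at hIH
      -- hIH : ∑ j ∈ range (b::t').length, X ^ descList (b :: insertIdx j n t') + X ^ (1 + D) = RHS_t
      have hsum3 : ∑ j ∈ range ((b :: t').length), (X:ℝ[X]) ^ descList (b :: List.insertIdx t' j n)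
          = ((D : ℝ[X]) + 1) * X ^ D + (((b :: t').length - D : ℕ) : ℝ[X]) * X ^ (D + 1)
            - X ^ (1 + D) := by
      -- from hIH
        rw [← hIH, hD]
        ring
      have hda : descList (a :: n :: b :: t') = 1 + D := by
        show (if n < a then 1 else 0) + descList (n :: b :: t') = 1 + D
        rw [if_neg (by omega), hins0]
        omega
      rw [hsum2, hsum3, hda]
      have hdab : descList (a :: b :: t') = (if b < a then 1 else 0) + D := rfl
      simp only [hdab]
      by_cases hba : b < a
      · rw [if_pos hba]
        simp only [List.length_cons]
        rw [show t'.length + 1 + 1 - (1 + D) = t'.length + 1 - D from by omega,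
            show t'.length + 1 - D = (t'.length - D) + 1 from by omega]
        push_cast
        ring
      · rw [if_neg hba]
        simp only [List.length_cons]
        rw [show t'.length + 1 + 1 - (0 + D) = (t'.length + 1 - D) + 1 from by omega,
            show t'.length + 1 - D = (t'.length - D) + 1 from by omega]
        push_cast
        ring

/-- The Eulerian polynomial `A_n(x) = ∑_{w ∈ S_n} x^{des(w)}`. -/
noncomputable def eulerian (n : ℕ) : Polynomial ℝ :=
  ∑ w : Equiv.Perm (Fin n), Polynomial.X ^ des w

lemma des_le {n : ℕ} (w : Equiv.Perm (Fin n)) : des w ≤ n - 1 := by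
  rw [des]
  exact le_trans (Finset.card_filter_le _ _) (by rw [Finset.card_range])

lemma listOf_length {n : ℕ} (w : Equiv.Perm (Fin n)) : (listOf w).length = n := by
  simp [listOf]

lemma listOf_mem {n : ℕ} (w : Equiv.Perm (Fin n)) : ∀ x ∈ listOf w, x < n := by
  intro x hx
  rw [listOf, List.mem_ofFn] at hx
  obtain ⟨i, rfl⟩ := hx
  exact (w i).is_lt

lemma eulerian_succ (n : ℕ) :
    eulerian (n+1) = (1 + (n : ℝ[X]) * X) * eulerian n
      + X * (1 - X) * derivative (eulerian n) := by
  have h1 : eulerian (n+1) = ∑ pw : Fin (n+1) × Equiv.Perm (Fin n), X ^ des (phi pw.1 pw.2) :=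
    (Fintype.sum_bijective _ phi_bijective _ _ (fun pw => rfl)).symm
  rw [h1, Fintype.sum_prod_type, Finset.sum_comm]
  have h2 : ∀ w : Equiv.Perm (Fin n), ∑ p : Fin (n+1), (X:ℝ[X]) ^ des (phi p w)
      = ((des w : ℝ[X]) + 1) * X ^ des w + ((n - des w : ℕ) : ℝ[X]) * X ^ (des w + 1) := by
    intro w
    have h3 : ∀ p : Fin (n+1), des (phi p w) = descList ((listOf w).insertIdx (p : ℕ) n) := by
      intro p
      rw [des_eq_descList, ← listOf_phi]
      rfl
    simp only [h3]
    rw [Fin.sum_univ_eq_sum_range (fun i => (X:ℝ[X]) ^ descList ((listOf w).insertIdx i n))]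
    rw [show n + 1 = (listOf w).length + 1 from by rw [listOf_length]]
    rw [insert_sum n (listOf w) (listOf_mem w)]
    rw [show descList (listOf w) = des w from (des_eq_descList w).symm, listOf_length]
  rw [Finset.sum_congr rfl (fun w _ => h2 w)]
  rw [eulerian, derivative_sum, Finset.mul_sum, Finset.mul_sum, ← Finset.sum_add_distrib]
  apply Finset.sum_congr rfl
  intro w _
  have hd : des w ≤ n := le_trans (des_le w) (Nat.sub_le n 1)
  rw [derivative_X_pow]
  rcases Nat.eq_zero_or_pos (des w) with h0 | hpos
  · rw [h0]
    push_cast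
    simp
  · obtain ⟨e, he⟩ : ∃ e, des w = e + 1 := ⟨des w - 1, by omega⟩
    rw [he] at hd ⊢
    rw [show e + 1 - 1 = e from rfl, map_natCast C, Nat.cast_sub hd]
    push_cast
    ring

lemma eulerian_zero : eulerian 0 = 1 := by
  rw [eulerian, Fintype.sum_subsingleton _ (1 : Equiv.Perm (Fin 0))]
  simp [des]

lemma eulerian_one : eulerian 1 = 1 := by
  rw [eulerian, Fintype.sum_subsingleton _ (1 : Equiv.Perm (Fin 1))]
  simp [des]

noncomputable def Jp (n : ℕ) : ℝ[X] :=
  ∑ k ∈ range (n+1), C ((n.choose k : ℝ)) * ((X - 1) ^ (n - k) * eulerian k)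

lemma J_eq : ∀ n : ℕ, 1 ≤ n → Jp n = X * eulerian n := by
  intro n hn
  induction n, hn using Nat.le_induction with
  | base =>
    rw [Jp]
    rw [show (1:ℕ) + 1 = 2 from rfl, Finset.sum_range_succ, Finset.sum_range_one]
    simp [eulerian_zero, eulerian_one]
  | succ n hn ih =>
    -- Step 1 : Jp (n+1) = (X-1) * Jp n + K n
    have step1 : Jp (n+1) = (X - 1) * Jp n
        + ∑ k ∈ range (n+1), C ((n.choose k : ℝ)) * ((X - 1) ^ (n - k) * eulerian (k+1)) := by
      rw [Jp, Finset.sum_range_succ']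
      have hz : ∀ k ∈ range (n+1),
          C (((n+1).choose (k+1) : ℝ)) * ((X - 1) ^ (n + 1 - (k+1)) * eulerian (k+1))
          = C ((n.choose k : ℝ)) * ((X - 1) ^ (n - k) * eulerian (k+1))
            + C ((n.choose (k+1) : ℝ)) * ((X - 1) ^ (n - k) * eulerian (k+1)) := by
        intro k _
        rw [Nat.choose_succ_succ, Nat.succ_sub_succ, Nat.cast_add, C_add]
        ring
      rw [Finset.sum_congr rfl hz, Finset.sum_add_distrib]
      have hJ : (X - 1) * Jp n
          = ∑ k ∈ range (n+1), C ((n.choose (k+1) : ℝ)) * ((X - 1) ^ (n - k) * eulerian (k+1))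
            + C (((n+1).choose 0 : ℝ)) * ((X - 1) ^ (n + 1 - 0) * eulerian 0) := by
        rw [Jp, Finset.mul_sum, Finset.sum_range_succ']
        rw [Finset.sum_range_succ]
        simp only [Nat.choose_succ_self, Nat.cast_zero, map_zero, zero_mul, add_zero,
          Nat.choose_zero_right, Nat.cast_one, map_one, one_mul, Nat.sub_zero]
        apply congrArg₂ (· + ·)
        · apply Finset.sum_congr rfl
          intro k hk
          rw [Finset.mem_range] at hk
          rw [show n - k = (n - (k+1)) + 1 from by omega, pow_succ]
          ring
        · rw [show (n:ℕ) + 1 = n + 1 from rfl, pow_succ]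
          ring
      rw [hJ]
      ring
    -- Step 2 : K n = (1 + n X) * Jp n + X (1-X) * derivative (Jp n)
    have step2 : ∑ k ∈ range (n+1), C ((n.choose k : ℝ)) * ((X - 1) ^ (n - k) * eulerian (k+1))
        = (1 + (n : ℝ[X]) * X) * Jp n + X * (1 - X) * derivative (Jp n) := by
      rw [Jp, derivative_sum, Finset.mul_sum, Finset.mul_sum, ← Finset.sum_add_distrib]
      apply Finset.sum_congr rfl
      intro k hk
      rw [Finset.mem_range] at hk
      have hkn : k ≤ n := by omega
      rw [eulerian_succ k]
      rw [derivative_C_mul, derivative_mul, derivative_pow, derivative_sub, derivative_X,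
        derivative_one, sub_zero, mul_one]
      rcases Nat.eq_zero_or_pos (n - k) with h0 | hpos
      · have : n = k := by omega
        subst this
        rw [h0]
        push_cast
        simp only [map_zero]
        ring
      · obtain ⟨e, he⟩ : ∃ e, n - k = e + 1 := ⟨n - k - 1, by omega⟩
        rw [he, show e + 1 - 1 = e from rfl, map_natCast C (e+1)]
        have hcast : ((k : ℝ[X])) = (n : ℝ[X]) - ((n - k : ℕ) : ℝ[X]) := by
          rw [Nat.cast_sub hkn]; ring
        rw [hcast, he]
        push_cast
        ring
    rw [step1, step2, ih]
    rw [show derivative (X * eulerian n) = eulerian n + X * derivative (eulerian n) from by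
      rw [derivative_mul, derivative_X, one_mul]]
    rw [eulerian_succ n]
    ring

lemma alt_sum (M : ℕ) :
    ∑ i ∈ range (M+1), ((-1:ℝ)^(M-i) * (M.choose i)) = 0^M := by
  have h := add_pow (1:ℝ) (-1) M
  simp only [one_pow, one_mul, add_neg_cancel] at h
  rw [h]

lemma alt_pow (M : ℕ) :
    ∑ i ∈ range (M+1), C ((-1:ℝ)^(M-i) * (M.choose i)) * X^i = (X-1)^M := by
  have h := add_pow (X : ℝ[X]) (C (-1)) M
  have hx : (X : ℝ[X]) + C (-1) = X - 1 := by
    rw [map_neg, map_one]; ring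
  rw [hx] at h
  rw [h]
  apply Finset.sum_congr rfl
  intro i _
  rw [map_mul, map_pow, map_natCast C]
  ring

noncomputable def Gp (n : ℕ) : ℝ[X] :=
  ∑ k ∈ range (n+1), C ((n.choose k : ℝ)) * ((X ^ (n-k) - X) * eulerian k)

lemma G_key (n : ℕ) :
    ∑ m ∈ range (n+1), C (((-1:ℝ)^(n-m)) * (n.choose m)) * Gp m
      = Jp n - X * eulerian n := by
  have expand : ∀ m ∈ range (n+1),
      C (((-1:ℝ)^(n-m)) * (n.choose m)) * Gp m
        = ∑ k ∈ range (n+1),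
            C (((-1:ℝ)^(n-m)) * (n.choose m) * (m.choose k)) * ((X ^ (m-k) - X) * eulerian k) := by
    intro m hm
    rw [Finset.mem_range] at hm
    rw [Gp, Finset.mul_sum]
    rw [← Finset.sum_subset (Finset.range_subset_range.mpr (by omega : m + 1 ≤ n + 1))]
    · apply Finset.sum_congr rfl
      intro k _
      simp only [map_mul]
      ring
    · intro k _ hk
      rw [Finset.mem_range, not_lt] at hk
      have : m.choose k = 0 := Nat.choose_eq_zero_of_lt (by omega)
      rw [this]
      simp
  rw [Finset.sum_congr rfl expand, Finset.sum_comm]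
  have inner : ∀ k ∈ range (n+1),
      ∑ m ∈ range (n+1),
          C (((-1:ℝ)^(n-m)) * (n.choose m) * (m.choose k)) * ((X ^ (m-k) - X) * eulerian k)
        = C ((n.choose k : ℝ)) * (((X-1)^(n-k) - C ((0:ℝ)^(n-k)) * X) * eulerian k) := by
    intro k hk
    rw [Finset.mem_range] at hk
    have hkn : k ≤ n := by omega
    rw [Finset.range_eq_Ico, ← Finset.sum_Ico_consecutive _ (Nat.zero_le k) (by omega : k ≤ n + 1)]
    have hzero : ∑ m ∈ Finset.Ico 0 k,
        C (((-1:ℝ)^(n-m)) * (n.choose m) * (m.choose k)) * ((X ^ (m-k) - X) * eulerian k) = 0 := by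
      apply Finset.sum_eq_zero
      intro m hm
      rw [Finset.mem_Ico] at hm
      rw [Nat.choose_eq_zero_of_lt (show m < k from hm.2)]
      simp
    rw [hzero, zero_add, Finset.sum_Ico_eq_sum_range]
    have hrw : ∀ i ∈ range (n + 1 - k),
        C (((-1:ℝ)^(n-(k+i))) * (n.choose (k+i)) * ((k+i).choose k) : ℝ) * ((X ^ (k+i-k) - X) * eulerian k)
          = C ((n.choose k : ℝ)) * (C (((-1:ℝ)^(n-k-i)) * ((n-k).choose i)) * ((X ^ i - X) * eulerian k)) := by
      intro i hi
      rw [Finset.mem_range] at hi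
      have hmul : n.choose (k+i) * ((k+i).choose k) = n.choose k * (n-k).choose i := by
        have := Nat.choose_mul (n := n) (k := k + i) (s := k) (show k ≤ k + i by omega)
        rw [this, Nat.add_sub_cancel_left]
      have h1 : n - (k+i) = n - k - i := by omega
      rw [show k + i - k = i from by omega, h1]
      have h2 : ((n.choose (k+i)) : ℝ) * ((k+i).choose k) = (n.choose k : ℝ) * ((n-k).choose i) := by
        exact_mod_cast hmul
      rw [show ((-1:ℝ)^(n-k-i)) * (n.choose (k+i)) * ((k+i).choose k)
          = (n.choose k : ℝ) * (((-1:ℝ)^(n-k-i)) * ((n-k).choose i)) from by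
        linear_combination ((-1:ℝ)^(n-k-i)) * h2]
      simp only [map_mul]
      ring
    rw [Finset.sum_congr rfl hrw, ← Finset.mul_sum]
    congr 1
    have : ∑ i ∈ range (n + 1 - k),
        C (((-1:ℝ)^(n-k-i)) * ((n-k).choose i)) * ((X ^ i - X) * eulerian k)
        = (∑ i ∈ range ((n-k) + 1),
            C (((-1:ℝ)^((n-k)-i)) * ((n-k).choose i)) * (X ^ i - X)) * eulerian k := by
      rw [show n + 1 - k = (n - k) + 1 from by omega, Finset.sum_mul]
      apply Finset.sum_congr rfl
      intro i _
      ring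
    rw [this]
    congr 1
    have split : ∑ i ∈ range ((n-k) + 1),
        C (((-1:ℝ)^((n-k)-i)) * ((n-k).choose i)) * (X ^ i - X)
        = (∑ i ∈ range ((n-k) + 1), C (((-1:ℝ)^((n-k)-i)) * ((n-k).choose i)) * X ^ i)
          - (∑ i ∈ range ((n-k) + 1), C (((-1:ℝ)^((n-k)-i)) * ((n-k).choose i))) * X := by
      rw [Finset.sum_mul, ← Finset.sum_sub_distrib]
      apply Finset.sum_congr rfl
      intro i _
      ring
    rw [split, alt_pow, ← map_sum, alt_sum]
  rw [Finset.sum_congr rfl inner]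
  have final : ∀ k ∈ range (n+1),
      C ((n.choose k : ℝ)) * (((X-1)^(n-k) - C ((0:ℝ)^(n-k)) * X) * eulerian k)
        = C ((n.choose k : ℝ)) * ((X-1)^(n-k) * eulerian k)
          - C ((n.choose k : ℝ)) * (C ((0:ℝ)^(n-k)) * X * eulerian k) := by
    intro k _
    ring
  rw [Finset.sum_congr rfl final, Finset.sum_sub_distrib]
  have h1 : ∑ k ∈ range (n+1), C ((n.choose k:ℝ)) * ((X-1)^(n-k) * eulerian k) = Jp n := rfl
  have h2 : ∑ k ∈ range (n+1), C ((n.choose k:ℝ)) * (C ((0:ℝ)^(n-k)) * X * eulerian k)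
      = X * eulerian n := by
    rw [Finset.sum_range_succ]
    have hzero : ∀ k ∈ range n,
        C ((n.choose k : ℝ)) * (C ((0:ℝ)^(n-k)) * X * eulerian k) = 0 := by
      intro k hk
      rw [Finset.mem_range] at hk
      rw [zero_pow (by omega : n - k ≠ 0)]
      simp
    rw [Finset.sum_congr rfl hzero]
    simp
  rw [h1, h2]

lemma G_eq (n : ℕ) : Gp n = 1 - X := by
  induction n using Nat.strong_induction_on with
  | _ n ih =>
    rcases Nat.eq_zero_or_pos n with rfl | hn
    · rw [Gp]
      simp [eulerian_zero]
    · have key : ∑ m ∈ range (n+1), C (((-1:ℝ)^(n-m)) * (n.choose m)) * Gp m = 0 := by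
        rw [G_key n, J_eq n hn]
        ring
      rw [Finset.sum_range_succ] at key
      have hlast : C (((-1:ℝ)^(n-n)) * (n.choose n)) * Gp n = Gp n := by
        rw [Nat.sub_self, Nat.choose_self]
        simp
      rw [hlast] at key
      have hih : ∀ m ∈ range n, C (((-1:ℝ)^(n-m)) * (n.choose m)) * Gp m
          = C (((-1:ℝ)^(n-m)) * (n.choose m)) * (1 - X) := by
        intro m hm
        rw [Finset.mem_range] at hm
        rw [ih m hm]
      rw [Finset.sum_congr rfl hih, ← Finset.sum_mul, ← map_sum] at key
      have hsum : ∑ m ∈ range n, ((-1:ℝ)^(n-m)) * (n.choose m) = -1 := by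
        have h := alt_sum n
        rw [Finset.sum_range_succ, Nat.sub_self, Nat.choose_self,
          zero_pow (by omega : n ≠ 0)] at h
        simp at h
        linarith
      rw [hsum] at key
      have : Gp n = -(C (-1:ℝ) * (1 - X)) := by linear_combination key
      rw [this]
      simp [map_neg]

/-- The binomial Eulerian polynomial `Ã_n(x) = 1 + x ∑_{k=1}^n C(n,k) A_k(x)`. -/
noncomputable def binEulerian (n : ℕ) : Polynomial ℝ :=
  1 + Polynomial.X * ∑ k ∈ Finset.Icc 1 n, Polynomial.C ((n.choose k : ℝ)) * eulerian k

lemma range_succ_eq_insert (n : ℕ) : range (n+1) = insert 0 (Finset.Icc 1 n) := by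
  ext x
  simp only [Finset.mem_range, Finset.mem_insert, Finset.mem_Icc]
  omega

lemma starId (n : ℕ) :
    ∑ k ∈ range (n+1), C ((n.choose k : ℝ)) * (eulerian k * X ^ (n-k)) = binEulerian n := by
  have h1 : ∑ k ∈ range (n+1), C ((n.choose k : ℝ)) * (eulerian k * X ^ (n-k))
      = Gp n + X * ∑ k ∈ range (n+1), C ((n.choose k : ℝ)) * eulerian k := by
    rw [Gp, Finset.mul_sum, ← Finset.sum_add_distrib]
    apply Finset.sum_congr rfl
    intro k _
    ring
  have h2 : ∑ k ∈ range (n+1), C ((n.choose k : ℝ)) * eulerian k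
      = 1 + ∑ k ∈ Finset.Icc 1 n, C ((n.choose k : ℝ)) * eulerian k := by
    rw [range_succ_eq_insert, Finset.sum_insert (by simp)]
    simp [eulerian_zero]
  rw [h1, h2, G_eq, binEulerian]
  ring

lemma eulerian_coeff_eq_zero (k i : ℕ) (h : k - 1 < i) : (eulerian k).coeff i = 0 := by
  rw [eulerian, finset_sum_coeff]
  apply Finset.sum_eq_zero
  intro w _
  rw [coeff_X_pow, if_neg (show ¬ i = des w from by have := des_le w; omega)]

lemma des_trans_rev {k : ℕ} (w : Equiv.Perm (Fin k)) :
    des (w.trans Fin.revPerm) = (k - 1) - des w := by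
  have hval : ∀ i (h : i < k), permVal (w.trans Fin.revPerm) i = k - 1 - permVal w i := by
    intro i h
    rw [permVal, permVal, dif_pos h, dif_pos h]
    simp only [Equiv.trans_apply, Fin.revPerm_apply, Fin.val_rev]
    omega
  have hne : ∀ i ∈ range (k-1), permVal w (i+1) ≠ permVal w i := by
    intro i hi
    rw [Finset.mem_range] at hi
    rw [permVal, permVal, dif_pos (show i < k by omega), dif_pos (show i + 1 < k by omega)]
    intro hcontra
    have := w.injective (Fin.val_injective hcontra)
    simp only [Fin.mk.injEq] at this
    omega
  have hlt : ∀ i (h : i < k), permVal w i ≤ k - 1 := by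
    intro i h
    rw [permVal, dif_pos h]
    have := (w ⟨i, h⟩).is_lt
    omega
  have hcond : ∀ i ∈ range (k-1),
      (permVal (w.trans Fin.revPerm) (i+1) < permVal (w.trans Fin.revPerm) i
        ↔ ¬ (permVal w (i+1) < permVal w i)) := by
    intro i hi
    have hir := Finset.mem_range.mp hi
    rw [hval i (by omega), hval (i+1) (by omega)]
    have h1 := hlt i (by omega)
    have h2 := hlt (i+1) (by omega)
    have h3 := hne i hi
    omega
  rw [des, Finset.filter_congr hcond]
  have htot := Finset.card_filter_add_card_filter_not
    (s := range (k-1)) (p := fun i => permVal w (i+1) < permVal w i)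
  rw [Finset.card_range] at htot
  have hdes : des w = ((range (k-1)).filter fun i => permVal w (i+1) < permVal w i).card := rfl
  omega


def revEquiv (k : ℕ) : Equiv.Perm (Fin k) ≃ Equiv.Perm (Fin k) where
  toFun w := w.trans Fin.revPerm
  invFun w := w.trans Fin.revPerm
  left_inv w := by ext x; simp
  right_inv w := by ext x; simp

lemma eulerian_coeff_symm (k i : ℕ) (hi : i ≤ k - 1) :
    (eulerian k).coeff i = (eulerian k).coeff (k - 1 - i) := by
  rw [eulerian, finset_sum_coeff, finset_sum_coeff]
  apply Fintype.sum_equiv (revEquiv k)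
  intro w
  have hd := des_le w
  have he : des ((revEquiv k) w) = (k - 1) - des w := des_trans_rev w
  rw [coeff_X_pow, coeff_X_pow, he]
  exact if_congr (by constructor <;> (intro; omega)) rfl rfl

/-- the binomial Eulerian polynomial is symmetric with center `n/2`,
i.e. `xⁿ Ã_n(1/x) = Ã_n(x)`. -/
theorem binEulerian_symmetric (n : ℕ) :
    (∀ i ≤ n, (binEulerian n).coeff i = (binEulerian n).coeff (n - i)) ∧
    (∀ i, n < i → (binEulerian n).coeff i = 0) := by
  constructor
  · intro i hi
    have hF : (binEulerian n).coeff i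
        = ∑ k ∈ range (n+1),
            (n.choose k : ℝ) * (if n - k ≤ i then (eulerian k).coeff (i - (n-k)) else 0) := by
      rw [← starId n, finset_sum_coeff]
      apply Finset.sum_congr rfl
      intro k _
      rw [coeff_C_mul, coeff_mul_X_pow']
    rcases eq_or_lt_of_le hi with rfl | hilt
    · -- i = n
      rw [Nat.sub_self, hF]
      have hterm : ∀ k ∈ range (i+1),
          (i.choose k : ℝ) * (if i - k ≤ i then (eulerian k).coeff (i - (i-k)) else 0)
            = if k = 0 then 1 else 0 := by
        intro k hk
        rw [Finset.mem_range] at hk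
        rw [if_pos (Nat.sub_le i k), show i - (i - k) = k from by omega]
        rcases Nat.eq_zero_or_pos k with rfl | hkpos
        · rw [if_pos rfl, eulerian_zero]
          simp
        · rw [if_neg (by omega), eulerian_coeff_eq_zero k k (by omega)]
          ring
      rw [Finset.sum_congr rfl hterm, Finset.sum_ite_eq' (range (i+1)) 0 (fun _ => (1:ℝ))]
      rw [if_pos (Finset.mem_range.mpr (by omega))]
      have : (binEulerian i).coeff 0 = 1 := by
        rw [binEulerian, coeff_add, coeff_one, if_pos rfl, Polynomial.mul_coeff_zero,
          coeff_X_zero]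
        ring
      rw [this]
    · -- i < n
      have hR : (binEulerian n).coeff (n - i)
          = ∑ k ∈ Finset.Icc 1 n, (n.choose k : ℝ) * (eulerian k).coeff (n - 1 - i) := by
        rw [binEulerian, coeff_add, coeff_one, if_neg (by omega : ¬ (n - i) = 0)]
        obtain ⟨j, hj⟩ : ∃ j, n - i = j + 1 := ⟨n - i - 1, by omega⟩
        rw [hj, coeff_X_mul, finset_sum_coeff, zero_add]
        apply Finset.sum_congr rfl
        intro k _
        rw [coeff_C_mul, show j = n - 1 - i from by omega]
      rw [hF, hR, range_succ_eq_insert, Finset.sum_insert (by simp)]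
      have h0 : (n.choose 0 : ℝ) * (if n - 0 ≤ i then (eulerian 0).coeff (i - (n-0)) else 0)
          = 0 := by
        rw [if_neg (by omega)]
        ring
      rw [h0, zero_add]
      apply Finset.sum_congr rfl
      intro k hk
      rw [Finset.mem_Icc] at hk
      by_cases hc : n - k ≤ i
      · rw [if_pos hc]
        congr 1
        rw [eulerian_coeff_symm k (i - (n-k)) (by omega)]
        congr 1
        omega
      · rw [if_neg hc, eulerian_coeff_eq_zero k (n-1-i) (by omega)]
  · intro i hin
    rw [binEulerian, coeff_add, coeff_one, if_neg (by omega)]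
    obtain ⟨j, hj⟩ : ∃ j, i = j + 1 := ⟨i - 1, by omega⟩
    rw [hj, coeff_X_mul, finset_sum_coeff, zero_add]
    apply Finset.sum_eq_zero
    intro k hk
    rw [Finset.mem_Icc] at hk
    rw [coeff_C_mul, eulerian_coeff_eq_zero k j (by omega)]
    ring
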